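/- Let (M₁, M₂) and (N₁, N₂) be two-outcome POVMs on ℂ^d, let p₁, ..., p_d ≥ 0 with Σ_i p_i = 1, let {e_i} be an orthonormal family in ℂ^D with D ≥ d, and set ψ = Σ_i √p_i · (|i⟩ ⊗ |e_i⟩), a unit vector in ℂ^d ⊗ ℂ^D. Then the blocks T_μ = Tr_S[((M_μ − N_μ) ⊗ I_D)(ψψ†)] satisfy ‖T₁‖_* + ‖T₂‖_* = 2·‖Δ·(M₁ − N₁)ᵀ·Δ‖_*, where Δ = diag(√p₁, ..., √p_d) and (M₁ − N₁)ᵀ is the transpose of M₁ − N₁. -/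

import Mathlib

open Matrix
open scoped ComplexOrder

/-- The trace norm (nuclear norm) of a complex matrix: the trace of `√(Mᴴ M)`,
which equals the sum of the singular values of `M`. -/
noncomputable def traceNorm {n : Type*} [Fintype n] [DecidableEq n]
    (M : Matrix n n ℂ) : ℝ :=
  (((Matrix.posSemidef_conjTranspose_mul_self M).1.eigenvectorUnitary : Matrix n n ℂ) *
      Matrix.diagonal (fun i => ((Real.sqrt
        ((Matrix.posSemidef_conjTranspose_mul_self M).1.eigenvalues i) : ℝ) : ℂ)) *
      (star (Matrix.posSemidef_conjTranspose_mul_self M).1.eigenvectorUnitary :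
        Matrix n n ℂ)).trace.re

/-- `partialTraceS X ρ = Tr_S[(X ⊗ I) ρ]`: the `D × D` matrix with entries
`(T)_{ab} = ∑ i j, X_{ji} ρ_{(i,a),(j,b)}`, the partial trace over the system factor. -/
noncomputable def partialTraceS {d D : ℕ} (X : Matrix (Fin d) (Fin d) ℂ)
    (ρ : Matrix (Fin d × Fin D) (Fin d × Fin D) ℂ) : Matrix (Fin D) (Fin D) ℂ :=
  Matrix.of fun a b => ∑ i, ∑ j, X j i * ρ (i, a) (j, b)

open scoped MatrixOrder in
lemma traceNorm_eq_cfc {n : Type*} [Fintype n] [DecidableEq n]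
    (M : Matrix n n ℂ) : traceNorm M = (CFC.sqrt (Mᴴ * M)).trace.re := by
  have hA := Matrix.posSemidef_conjTranspose_mul_self M
  rw [CFC.sqrt_eq_cfc, cfc_nnreal_eq_real _ (Mᴴ * M) hA.nonneg, hA.1.cfc_eq]
  unfold traceNorm
  simp [IsHermitian.cfc, Unitary.conjStarAlgAut_apply, Function.comp_def,
    max_eq_left (hA.eigenvalues_nonneg _)]

open scoped MatrixOrder in
lemma traceNorm_congr {n : Type*} [Fintype n] [DecidableEq n]
    (A B : Matrix n n ℂ) (h : Aᴴ * A = Bᴴ * B) : traceNorm A = traceNorm B := by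
  rw [traceNorm_eq_cfc, traceNorm_eq_cfc, h]

lemma traceNorm_neg {n : Type*} [Fintype n] [DecidableEq n]
    (A : Matrix n n ℂ) : traceNorm (-A) = traceNorm A :=
  traceNorm_congr _ _ (by simp)

open scoped MatrixOrder in
lemma traceNorm_isometry {d D : ℕ} (E : Matrix (Fin D) (Fin d) ℂ)
    (hE : Eᴴ * E = 1) (A : Matrix (Fin d) (Fin d) ℂ) :
    traceNorm (E * A * Eᴴ) = traceNorm A := by
  set S := CFC.sqrt (Aᴴ * A) with hSdef
  have hS : S.PosSemidef := Matrix.nonneg_iff_posSemidef.1 (CFC.sqrt_nonneg _)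
  have hSsq : S * S = Aᴴ * A :=
    CFC.sqrt_mul_sqrt_self _ (Matrix.posSemidef_conjTranspose_mul_self A).nonneg
  have hESE : (E * S * Eᴴ).PosSemidef := hS.mul_mul_conjTranspose_same E
  have hsq : (E * S * Eᴴ) ^ 2 = (E * A * Eᴴ)ᴴ * (E * A * Eᴴ) := by
    have h1 : (E * A * Eᴴ)ᴴ = E * Aᴴ * Eᴴ := by
      rw [Matrix.conjTranspose_mul, Matrix.conjTranspose_mul]
      simp [Matrix.mul_assoc]
    rw [pow_two, h1]
    have h3 : Eᴴ * (E * (S * Eᴴ)) = S * Eᴴ := by rw [← Matrix.mul_assoc, hE, Matrix.one_mul]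
    have h4 : Eᴴ * (E * (A * Eᴴ)) = A * Eᴴ := by rw [← Matrix.mul_assoc, hE, Matrix.one_mul]
    simp only [Matrix.mul_assoc]
    rw [h3, h4, show S * (S * Eᴴ) = S * S * Eᴴ from (Matrix.mul_assoc _ _ _).symm, hSsq,
      Matrix.mul_assoc]
  have hsqrt : E * S * Eᴴ = CFC.sqrt ((E * A * Eᴴ)ᴴ * (E * A * Eᴴ)) :=
    (CFC.sqrt_unique (by rw [← pow_two]; exact hsq) hESE.nonneg).symm
  rw [traceNorm_eq_cfc, traceNorm_eq_cfc]
  rw [← hsqrt, ← hSdef, Matrix.trace_mul_cycle, hE, Matrix.one_mul]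

/-- For two-outcome POVMs `(M₁, M₂)`, `(N₁, N₂)` on `ℂ^d`, weights `p_i ≥ 0` summing to `1`,
an orthonormal family `{e_i}` in `ℂ^D` (`D ≥ d`), and the unit vector
`ψ = ∑ i √p_i |i⟩ ⊗ |e_i⟩`, the blocks `T_μ = Tr_S[((M_μ − N_μ) ⊗ I)(ψψ†)]` satisfy
`‖T₁‖_* + ‖T₂‖_* = 2 ‖Δ (M₁ − N₁)ᵀ Δ‖_*` where `Δ = diag(√p₁, …, √p_d)`. -/
theorem traceNorm_partialTrace_add_eq_twice_weighted {d D : ℕ} (hdD : d ≤ D)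
    (M₁ M₂ N₁ N₂ : Matrix (Fin d) (Fin d) ℂ)
    (hM₁ : M₁.PosSemidef) (hM₂ : M₂.PosSemidef) (hMsum : M₁ + M₂ = 1)
    (hN₁ : N₁.PosSemidef) (hN₂ : N₂.PosSemidef) (hNsum : N₁ + N₂ = 1)
    (p : Fin d → ℝ) (hp : ∀ i, 0 ≤ p i) (hpsum : ∑ i, p i = 1)
    (e : Fin d → Fin D → ℂ)
    (he : ∀ i j, star (e i) ⬝ᵥ e j = if i = j then (1 : ℂ) else 0)
    (ψ : Fin d × Fin D → ℂ)
    (hψ : ψ = fun x => (Real.sqrt (p x.1) : ℂ) * e x.1 x.2) :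
    traceNorm (partialTraceS (M₁ - N₁) (Matrix.vecMulVec ψ (star ψ))) +
      traceNorm (partialTraceS (M₂ - N₂) (Matrix.vecMulVec ψ (star ψ))) =
      2 * traceNorm (Matrix.diagonal (fun i => (Real.sqrt (p i) : ℂ)) * (M₁ - N₁)ᵀ *
        Matrix.diagonal (fun i => (Real.sqrt (p i) : ℂ))) := by
  set X := M₁ - N₁ with hX
  set Δ := Matrix.diagonal (fun i => (Real.sqrt (p i) : ℂ)) with hΔ
  have h2 : M₂ - N₂ = -X := by
    have hM : M₂ = 1 - M₁ := by rw [← hMsum]; abel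
    have hN : N₂ = 1 - N₁ := by rw [← hNsum]; abel
    rw [hM, hN, hX]; abel
  set E : Matrix (Fin D) (Fin d) ℂ := Matrix.of fun a i => e i a with hEdef
  have hE : Eᴴ * E = 1 := by
    ext i j
    have h := he i j
    simp only [dotProduct, Pi.star_apply] at h
    simp only [Matrix.mul_apply, Matrix.conjTranspose_apply, Matrix.of_apply,
      Matrix.one_apply, hEdef]
    exact h
  have hneg : partialTraceS (-X) (Matrix.vecMulVec ψ (star ψ)) =
      -(partialTraceS X (Matrix.vecMulVec ψ (star ψ))) := by
    ext a b
    simp [partialTraceS, ← Finset.sum_neg_distrib]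
  have key : partialTraceS X (Matrix.vecMulVec ψ (star ψ)) = E * (Δ * Xᵀ * Δ) * Eᴴ := by
    ext a b
    have lhs_eq : partialTraceS X (Matrix.vecMulVec ψ (star ψ)) a b =
        ∑ i, ∑ j, X j i * (((Real.sqrt (p i) : ℂ) * e i a) *
          ((Real.sqrt (p j) : ℂ) * (starRingEnd ℂ) (e j b))) := by
      simp [partialTraceS, Matrix.vecMulVec_apply, hψ, mul_comm, mul_left_comm, mul_assoc]
    have hA' : Δ * Xᵀ * Δ = Matrix.of fun i j =>
        (Real.sqrt (p i) : ℂ) * X j i * (Real.sqrt (p j) : ℂ) := by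
      ext i j
      rw [hΔ]
      simp [Matrix.mul_diagonal, Matrix.diagonal_mul, Matrix.transpose_apply, mul_assoc]
    rw [lhs_eq, hA']
    simp only [Matrix.mul_apply, Matrix.conjTranspose_apply, Matrix.of_apply, hEdef,
      Finset.sum_mul, starRingEnd_apply]
    conv_rhs => rw [Finset.sum_comm]
    refine Finset.sum_congr rfl fun i _ => Finset.sum_congr rfl fun j _ => ?_
    ring
  rw [h2, hneg, traceNorm_neg, key, traceNorm_isometry E hE, two_mul]
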